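/- Let G be a finite group acting by K-algebra automorphisms on a K-algebra S with invariant subring R = S^G, and suppose |G| is invertible in K. Then for every R-algebra A, the natural map A → (A ⊗_R S)^G, a ↦ a ⊗ 1, is an isomorphism of R-algebras, where G acts on A ⊗_R S via its action on the second factor. -/

import Mathlib

open scoped TensorProduct

/-- The invariant subalgebra `S^G` of an action of a group `G` on a `K`-algebra `S`
by `K`-algebra automorphisms. -/
def invarSub {K S : Type*} [CommSemiring K] [CommSemiring S] [Algebra K S]
    {G : Type*} [Group G] (act : G →* (S ≃ₐ[K] S)) : Subalgebra K S where
  carrier := {s : S | ∀ g : G, act g s = s}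
  mul_mem' := fun {a b} ha hb g => by rw [map_mul, ha g, hb g]
  add_mem' := fun {a b} ha hb g => by rw [map_add, ha g, hb g]
  algebraMap_mem' := fun r g => (act g).commutes r

/-- Each `g ∈ G` acts on `S` as a linear map over the invariant ring `R = S^G`. -/
def actLin {K S : Type*} [CommSemiring K] [CommSemiring S] [Algebra K S]
    {G : Type*} [Group G] (act : G →* (S ≃ₐ[K] S)) (g : G) :
    S →ₗ[↥(invarSub act)] S where
  toFun := act g
  map_add' := map_add _
  map_smul' := fun r s => by
    simp only [RingHom.id_apply, Algebra.smul_def, map_mul]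
    congr 1
    exact r.2 g

/-- The Reynolds operator `s ↦ |G|⁻¹ ∑ g, g s`, as an `R`-linear map `S → R`. -/
def reynolds {K S : Type*} [Field K] [CommRing S] [Algebra K S]
    {G : Type*} [Group G] [Fintype G] (act : G →* (S ≃ₐ[K] S)) :
    S →ₗ[↥(invarSub act)] ↥(invarSub act) where
  toFun s := ⟨(Fintype.card G : K)⁻¹ • ∑ g : G, act g s, by
    intro h
    rw [map_smul, map_sum]
    congr 1
    exact Fintype.sum_equiv (Equiv.mulLeft h) _ _ (fun g => by
      simp [← AlgEquiv.mul_apply, ← map_mul])⟩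
  map_add' x y := by
    ext
    simp [Finset.sum_add_distrib, smul_add]
  map_smul' r s := by
    ext
    show (Fintype.card G : K)⁻¹ • ∑ g : G, act g (r • s) =
      (r : S) * ((Fintype.card G : K)⁻¹ • ∑ g : G, act g s)
    have h1 : ∀ g : G, act g (r • s) = (r : S) * act g s := fun g => by
      rw [Algebra.smul_def, map_mul]
      congr 1
      exact r.2 g
    rw [Finset.sum_congr rfl fun g _ => h1 g, ← Finset.mul_sum, mul_smul_comm]

theorem reynolds_one {K S : Type*} [Field K] [CommRing S] [Algebra K S]
    {G : Type*} [Group G] [Fintype G] (act : G →* (S ≃ₐ[K] S))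
    (hcard : (Fintype.card G : K) ≠ 0) : reynolds act 1 = 1 := by
  ext
  show (Fintype.card G : K)⁻¹ • ∑ g : G, act g 1 = (1 : S)
  simp only [map_one, Finset.sum_const, Finset.card_univ, smul_eq_mul, mul_one]
  rw [← Nat.cast_smul_eq_nsmul K, smul_smul, inv_mul_cancel₀ hcard, one_smul]

theorem reynolds_coe {K S : Type*} [Field K] [CommRing S] [Algebra K S]
    {G : Type*} [Group G] [Fintype G] (act : G →* (S ≃ₐ[K] S)) (s : S) :
    (reynolds act s : S) = (Fintype.card G : K)⁻¹ • ∑ g : G, act g s := rfl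

set_option synthInstance.maxHeartbeats 1000000
set_option maxHeartbeats 1000000

/-- In the nonmodular case, taking invariants commutes with base change along `R → A` for
the invariant ring `R = S^G`: the natural map `A → (A ⊗_R S)^G`, `a ↦ a ⊗ 1`, is an
isomorphism of `R`-algebras (here: it is injective with image exactly the invariants of
`A ⊗_R S`, where `G` acts on the second tensor factor). -/
theorem stmt0 {K S : Type*} [Field K] [CommRing S] [Algebra K S]
    {G : Type*} [Group G] [Fintype G]
    (act : G →* (S ≃ₐ[K] S)) (hcard : (Fintype.card G : K) ≠ 0)
    (A : Type*) [CommRing A] [Algebra (↥(invarSub act)) A] :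
    Function.Injective (fun a : A => a ⊗ₜ[↥(invarSub act)] (1 : S)) ∧
    Set.range (fun a : A => a ⊗ₜ[↥(invarSub act)] (1 : S)) =
      {x : A ⊗[↥(invarSub act)] S |
        ∀ g : G, TensorProduct.map LinearMap.id (actLin act g) x = x} := by
  set R := ↥(invarSub act) with hR
  -- retraction φ : A ⊗ S → A, a ⊗ s ↦ τ(s) • a
  set φ : A ⊗[R] S →ₗ[R] A := TensorProduct.lift
    (LinearMap.mk₂ R (fun a s => reynolds act s • a)
      (fun a a' s => smul_add _ _ _)
      (fun r a s => smul_comm _ _ _)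
      (fun a s s' => by
        show reynolds act (s + s') • a = reynolds act s • a + reynolds act s' • a
        rw [map_add, add_smul])
      (fun r a s => by
        show reynolds act (r • s) • a = r • (reynolds act s • a)
        rw [map_smul, smul_assoc])) with hφ
  have hφ1 : ∀ a : A, φ (a ⊗ₜ[R] (1 : S)) = a := by
    intro a
    rw [hφ, TensorProduct.lift.tmul]
    show reynolds act 1 • a = a
    rw [reynolds_one act hcard, one_smul]
  -- the unit in R inverting |G|
  set u : R := algebraMap K R (Fintype.card G : K)⁻¹ with hu
  have hucard : u * (Fintype.card G : R) = 1 := by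
    rw [hu, ← map_natCast (algebraMap K R) (Fintype.card G), ← map_mul,
      inv_mul_cancel₀ hcard, map_one]
  -- the averaged projection ψ on A ⊗ S
  set ψ : A ⊗[R] S → A ⊗[R] S := fun x =>
    u • ∑ g : G, TensorProduct.map (LinearMap.id : A →ₗ[R] A) (actLin act g) x with hψ
  have hψadd : ∀ x y, ψ (x + y) = ψ (x) + ψ (y) := by
    intro x y
    simp only [hψ, map_add, Finset.sum_add_distrib, smul_add]
  have hψtmul : ∀ (a : A) (s : S), ψ (a ⊗ₜ[R] s) = (reynolds act s • a) ⊗ₜ[R] (1 : S) := by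
    intro a s
    show u • ∑ g : G, TensorProduct.map (LinearMap.id : A →ₗ[R] A) (actLin act g) (a ⊗ₜ[R] s)
        = (reynolds act s • a) ⊗ₜ[R] (1 : S)
    simp only [TensorProduct.map_tmul, LinearMap.id_coe, id_eq]
    rw [← TensorProduct.tmul_sum, ← TensorProduct.tmul_smul, TensorProduct.smul_tmul]
    congr 1
    show (u : S) * ∑ g : G, act g s = (reynolds act s : S) * 1
    rw [mul_one, reynolds_coe, Algebra.smul_def]
    rfl
  constructor
  · intro a b hab
    have := congrArg φ hab
    exact (hφ1 a).symm.trans (this.trans (hφ1 b))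
  · ext x
    constructor
    · rintro ⟨a, rfl⟩
      intro g
      show TensorProduct.map LinearMap.id (actLin act g) (a ⊗ₜ[R] (1 : S)) = a ⊗ₜ[R] (1 : S)
      rw [TensorProduct.map_tmul]
      congr 1
      exact map_one (act g)
    · intro hx
      have hψx : ψ x = x := by
        show u • ∑ g : G, TensorProduct.map (LinearMap.id : A →ₗ[R] A) (actLin act g) x = x
        have : ∀ g : G, TensorProduct.map (LinearMap.id : A →ₗ[R] A) (actLin act g) x = x := hx
        rw [Finset.sum_congr rfl (fun g _ => this g), Finset.sum_const, Finset.card_univ,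
          ← Nat.cast_smul_eq_nsmul R, smul_smul, hucard, one_smul]
      have : ∀ y : A ⊗[R] S, ∃ a : A, ψ y = a ⊗ₜ[R] (1 : S) := by
        intro y
        induction y using TensorProduct.induction_on with
        | zero => exact ⟨0, by simp [hψ]⟩
        | tmul a s => exact ⟨reynolds act s • a, hψtmul a s⟩
        | add y z hy hz =>
          obtain ⟨a, ha⟩ := hy
          obtain ⟨b, hb⟩ := hz
          exact ⟨a + b, by rw [hψadd, ha, hb, TensorProduct.add_tmul]⟩
      obtain ⟨a, ha⟩ := this x
      exact ⟨a, by rw [← hψx, ha]⟩
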